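/- Let f be the solution of the Stein equation g_*(x) f'(x) - x f(x) = h(x) - E[h(Z)] given by f(x) = (1/(g_*(x)ρ(x))) ∫_l^x (h(y)-E[h(Z)]) ρ(y) dy, where h is Lipschitz. Then for all x∈(l,u), f'(x) = (1/(g_*(x)²ρ(x))) ∫_x^u ∫_l^x (1-Φ(s)) Φ(t) (h'(t)-h'(s)) dt ds. -/

import Mathlib

open MeasureTheory Set Filter Topology intervalIntegral


lemma ftc_ae {g g' : ℝ → ℝ} {M : ℝ} {a b c : ℝ} (hab : a ≤ b) (hbc : b < c) (hM : 0 ≤ M)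
    (hLip : ∀ s ∈ Icc a c, ∀ t ∈ Icc a c, |g s - g t| ≤ M * |s - t|)
    (hd : ∀ᵐ t ∂(volume : Measure ℝ), t ∈ Ioo a b → HasDerivAt g (g' t) t)
    (hmeas : AEStronglyMeasurable g' (volume.restrict (Ioo a b))) :
    ∫ t in Ioo a b, g' t = g b - g a := by
  have hlip' : LipschitzOnWith M.toNNReal g (Icc a c) := by
    rw [lipschitzOnWith_iff_dist_le_mul]
    intro s hs t ht
    simpa [Real.dist_eq, Real.coe_toNNReal M hM] using hLip s hs t ht
  have hcont : ContinuousOn g (Icc a c) := hlip'.continuousOn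
  set δ : ℕ → ℝ := fun n => (c - b)/(n+1) with hδ
  have hδpos : ∀ n, 0 < δ n := fun n => div_pos (by linarith) (by positivity)
  have hδle : ∀ n, δ n ≤ c - b := fun n => by
    rw [hδ]; rw [div_le_iff₀ (by positivity)]; nlinarith [hδpos n]
  have hδ0 : Tendsto δ atTop (𝓝 0) := by
    have : Tendsto (fun n : ℕ => 1 / ((n:ℝ) + 1)) atTop (𝓝 0) := tendsto_one_div_add_atTop_nhds_zero_nat
    have h2 : δ = fun n : ℕ => (c - b) * (1/(n+1)) := by funext n; rw [hδ]; ring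
    rw [h2]; simpa using this.const_mul (c - b)
  -- the difference quotients
  set φ : ℕ → ℝ → ℝ := fun n t => (g (t + δ n) - g t) / δ n with hφ
  have hmem : ∀ n, ∀ t ∈ Icc a b, t + δ n ∈ Icc a c := fun n t ht =>
    ⟨by have := (hδpos n).le; have := ht.1; linarith,
     by have := hδle n; have := ht.2; linarith⟩
  have hIcc : Icc a b ⊆ Icc a c := Icc_subset_Icc le_rfl (le_of_lt hbc)
  -- measurability of φ n on Ioo a b
  have hφmeas : ∀ n, AEStronglyMeasurable (φ n) (volume.restrict (Ioo a b)) := by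
    intro n
    have h1 : ContinuousOn (fun t => g (t + δ n)) (Icc a b) := by
      apply hcont.comp (by fun_prop) (fun t ht => hmem n t ht)
    have h2 : ContinuousOn (φ n) (Icc a b) :=
      ((h1.sub (hcont.mono hIcc)).div_const _)
    exact (h2.mono Ioo_subset_Icc_self).aestronglyMeasurable measurableSet_Ioo
  -- uniform bound
  have hφbd : ∀ n, ∀ᵐ t ∂(volume.restrict (Ioo a b)), ‖φ n t‖ ≤ M := by
    intro n
    filter_upwards [ae_restrict_mem measurableSet_Ioo] with t ht
    have h1 : |g (t + δ n) - g t| ≤ M * |t + δ n - t| :=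
      hLip _ (hmem n t (Ioo_subset_Icc_self ht)) _ (hIcc (Ioo_subset_Icc_self ht))
    have h2 : |t + δ n - t| = δ n := by
      rw [add_sub_cancel_left, abs_of_pos (hδpos n)]
    rw [hφ]
    simp only [Real.norm_eq_abs, abs_div, abs_of_pos (hδpos n)]
    rw [div_le_iff₀ (hδpos n)]
    calc |g (t + δ n) - g t| ≤ M * |t + δ n - t| := h1
    _ = M * δ n := by rw [h2]
  -- a.e. convergence
  have hφtend : ∀ᵐ t ∂(volume.restrict (Ioo a b)),
      Tendsto (fun n => φ n t) atTop (𝓝 (g' t)) := by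
    filter_upwards [ae_restrict_of_ae hd, ae_restrict_mem measurableSet_Ioo] with t hdt ht
    have hder := hdt ht
    have hslope := hasDerivAt_iff_tendsto_slope.1 hder
    have hseq : Tendsto (fun n => t + δ n) atTop (𝓝[≠] t) := by
      apply tendsto_nhdsWithin_of_tendsto_nhds_of_eventually_within
      · simpa using (tendsto_const_nhds.add hδ0)
      · filter_upwards with n
        simp only [mem_compl_iff, mem_singleton_iff]
        have := hδpos n; intro hc; nlinarith [hδpos n, congrArg (· - t) hc]
    have := hslope.comp hseq
    apply this.congr
    intro n
    simp [slope_def_field, hφ, div_eq_div_iff (hδpos n).ne']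
  -- dominated convergence
  have hdom : Tendsto (fun n => ∫ t in Ioo a b, φ n t) atTop (𝓝 (∫ t in Ioo a b, g' t)) := by
    apply tendsto_integral_of_dominated_convergence (fun _ => M) hφmeas _ hφbd hφtend
    · exact integrable_const M
  -- interval integrability of g within Icc a c
  have gInt : ∀ p q, p ∈ Icc a c → q ∈ Icc a c → IntervalIntegrable g volume p q := by
    intro p q hp hq
    exact (hcont.mono (uIcc_subset_Icc hp hq)).intervalIntegrable
  -- compute the integral of φ n
  have key : ∀ n, ∫ t in Ioo a b, φ n t =
      ((∫ t in b..(b + δ n), g t) - (∫ t in a..(a + δ n), g t)) / δ n := by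
    intro n
    have hg1 : IntegrableOn (fun t => g (t + δ n)) (Ioo a b) := by
      apply IntegrableOn.mono_set _ Ioo_subset_Icc_self
      exact (hcont.comp (by fun_prop) (fun t ht => hmem n t ht)).integrableOn_Icc
    have hg2 : IntegrableOn g (Ioo a b) := by
      apply IntegrableOn.mono_set _ Ioo_subset_Icc_self
      exact (hcont.mono hIcc).integrableOn_Icc
    have h1 : ∫ t in Ioo a b, φ n t = (∫ t in Ioo a b, (g (t + δ n) - g t)) / δ n := by
      rw [← MeasureTheory.integral_div]
    have h2 : ∫ t in Ioo a b, (g (t + δ n) - g t)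
        = (∫ t in Ioo a b, g (t + δ n)) - ∫ t in Ioo a b, g t := integral_sub hg1 hg2
    have h3 : ∫ t in Ioo a b, g (t + δ n) = ∫ t in a..b, g (t + δ n) := by
      rw [intervalIntegral.integral_of_le hab, integral_Ioc_eq_integral_Ioo]
    have h4 : ∫ t in Ioo a b, g t = ∫ t in a..b, g t := by
      rw [intervalIntegral.integral_of_le hab, integral_Ioc_eq_integral_Ioo]
    have h5 : ∫ t in a..b, g (t + δ n) = ∫ t in (a + δ n)..(b + δ n), g t :=
      intervalIntegral.integral_comp_add_right g (δ n)
    -- Chasles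
    have haa : a ∈ Icc a c := ⟨le_rfl, by linarith⟩
    have hba : b ∈ Icc a c := ⟨hab, hbc.le⟩
    have haδ : a + δ n ∈ Icc a c := by
      constructor
      · have := (hδpos n).le; linarith
      · have := hδle n; linarith
    have hbδ : b + δ n ∈ Icc a c := by
      constructor
      · have := (hδpos n).le; linarith
      · have := hδle n; linarith
    have hc1 : (∫ t in a..(a + δ n), g t) + ∫ t in (a + δ n)..(b + δ n), g t
        = ∫ t in a..(b + δ n), g t :=
      intervalIntegral.integral_add_adjacent_intervals (gInt _ _ haa haδ) (gInt _ _ haδ hbδ)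
    have hc2 : (∫ t in a..b, g t) + ∫ t in b..(b + δ n), g t = ∫ t in a..(b + δ n), g t :=
      intervalIntegral.integral_add_adjacent_intervals (gInt _ _ haa hba) (gInt _ _ hba hbδ)
    rw [h1, h2, h3, h4, h5]
    rw [← hc1] at hc2
    congr 1
    linarith
  -- limit of the boundary terms
  have keyB : ∀ p, p ∈ Icc a b →
      Tendsto (fun n => (∫ t in p..(p + δ n), g t) / δ n) atTop (𝓝 (g p)) := by
    intro p hp
    have hpc : p ∈ Icc a c := hIcc hp
    have hpd : ∀ n, p + δ n ∈ Icc a c := by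
      intro n
      constructor
      · have := (hδpos n).le; have := hp.1; linarith
      · have := hδle n; have := hp.2; linarith
    have hbound : ∀ n, |(∫ t in p..(p + δ n), g t) / δ n - g p| ≤ M * δ n := by
      intro n
      have hsub : ∫ t in p..(p + δ n), (g t - g p)
          = (∫ t in p..(p + δ n), g t) - δ n * g p := by
        rw [intervalIntegral.integral_sub (gInt _ _ hpc (hpd n)) intervalIntegrable_const,
          intervalIntegral.integral_const]
        simp only [smul_eq_mul, add_sub_cancel_left]
      have hb : |∫ t in p..(p + δ n), (g t - g p)| ≤ (M * δ n) * |p + δ n - p| := by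
        rw [← Real.norm_eq_abs]
        apply intervalIntegral.norm_integral_le_of_norm_le_const
        intro t ht
        rw [uIoc_of_le (by have := (hδpos n).le; linarith)] at ht
        have htc : t ∈ Icc a c := by
          constructor
          · have := hp.1; have := ht.1; linarith
          · have := (hpd n).2; have := ht.2; linarith
        have := hLip t htc p hpc
        have habs : |t - p| ≤ δ n := by
          rw [abs_of_pos (by linarith [ht.1])]
          linarith [ht.2]
        calc ‖g t - g p‖ = |g t - g p| := rfl
        _ ≤ M * |t - p| := this
        _ ≤ M * δ n := by nlinarith
      have hb' : |(∫ t in p..(p + δ n), g t) - δ n * g p| ≤ M * δ n * δ n := by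
        rw [← hsub]
        calc |∫ t in p..(p + δ n), (g t - g p)| ≤ (M * δ n) * |p + δ n - p| := hb
        _ = M * δ n * δ n := by rw [add_sub_cancel_left, abs_of_pos (hδpos n)]
      have heq : (∫ t in p..(p + δ n), g t) / δ n - g p
          = ((∫ t in p..(p + δ n), g t) - δ n * g p) / δ n := by
        field_simp [(hδpos n).ne']
      rw [heq, abs_div, abs_of_pos (hδpos n), div_le_iff₀ (hδpos n)]
      nlinarith [hδpos n]
    have hMδ : Tendsto (fun n => M * δ n) atTop (𝓝 0) := by simpa using hδ0.const_mul M
    have h0 : Tendsto (fun n => (∫ t in p..(p + δ n), g t) / δ n - g p) atTop (𝓝 0) := by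
      apply squeeze_zero_norm (fun n => hbound n) hMδ
    have := h0.add (tendsto_const_nhds (x := g p))
    simpa using this
  have final : Tendsto (fun n => ((∫ t in b..(b + δ n), g t) - (∫ t in a..(a + δ n), g t)) / δ n)
      atTop (𝓝 (g b - g a)) := by
    have := (keyB b ⟨hab, le_rfl⟩).sub (keyB a ⟨le_rfl, hab⟩)
    apply this.congr
    intro n
    rw [sub_div]
  refine tendsto_nhds_unique (hdom.congr (fun n => key n)) final


theorem stmt6 (ρ Φ gstar h h' f : ℝ → ℝ) (l u : ℝ) (hl : l < 0) (hu : 0 < u)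
    (K : NNReal) (m : ℝ)
    (hρcont : ContinuousOn ρ (Ioo l u))
    (hρpos : ∀ z ∈ Ioo l u, 0 < ρ z)
    (hρzero : ∀ z ∉ Ioo l u, ρ z = 0)
    (hρint : IntegrableOn ρ (Ioo l u))
    (hρprob : (∫ y in Ioo l u, ρ y) = 1)
    (hint : IntegrableOn (fun y => y * ρ y) (Ioo l u))
    (hmean : (∫ y in Ioo l u, y * ρ y) = 0)
    (hΦ : ∀ x, Φ x = ∫ t in Ioo l x, ρ t)
    (hg : ∀ x ∈ Ioo l u, gstar x * ρ x = ∫ y in Ioo x u, y * ρ y)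
    (hLip : LipschitzWith K h)
    (hderiv : ∀ᵐ t ∂(volume : Measure ℝ), HasDerivAt h (h' t) t)
    (hm : m = ∫ y in Ioo l u, h y * ρ y)
    (hhint : IntegrableOn (fun y => (h y - m) * ρ y) (Ioo l u))
    (hf : ∀ x ∈ Ioo l u,
      f x = (1 / (gstar x * ρ x)) * ∫ y in Ioo l x, (h y - m) * ρ y)
    (hSteinEq : ∀ x ∈ Ioo l u, ∃ f'x : ℝ, HasDerivAt f f'x x ∧
      gstar x * f'x - x * f x = h x - m) :
    ∀ x ∈ Ioo l u,
      HasDerivAt f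
        ((1 / ((gstar x) ^ 2 * ρ x)) *
          ∫ s in Ioo x u, ∫ t in Ioo l x, (1 - Φ s) * Φ t * (h' t - h' s)) x := by
  intro x hx
  obtain ⟨lx, xu⟩ := hx
  obtain ⟨d, hdd, hde⟩ := hSteinEq x ⟨lx, xu⟩
  have ρnn : ∀ t, 0 ≤ ρ t := by
    intro t
    by_cases ht : t ∈ Ioo l u
    · exact (hρpos t ht).le
    · rw [hρzero t ht]
  have hρglob : Integrable ρ (volume : Measure ℝ) := by
    have hρind : ρ = (Ioo l u).indicator ρ := by
      funext z
      by_cases hz : z ∈ Ioo l u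
      · rw [indicator_of_mem hz]
      · rw [indicator_of_notMem hz, hρzero z hz]
    rw [hρind]
    exact (integrable_indicator_iff measurableSet_Ioo).2 hρint
  have hΦeq : Φ = fun r => ∫ s in l..r, ρ s := by
    funext r
    rw [hΦ r]
    rcases le_or_gt l r with hlr | hlr
    · rw [intervalIntegral.integral_of_le hlr, integral_Ioc_eq_integral_Ioo]
    · have h0 : (∫ x in Ioc r l, ρ x) = 0 :=
        setIntegral_eq_zero_of_forall_eq_zero fun z hz =>
          hρzero z (by simp only [mem_Ioo, not_and, not_lt]; intro h1; linarith [hz.2])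
      rw [Ioo_eq_empty (by linarith), intervalIntegral.integral_of_ge hlr.le, h0]
      simp
  have hΦcont : Continuous Φ := by
    rw [hΦeq]
    exact intervalIntegral.continuous_primitive (fun a b => hρglob.intervalIntegrable) l
  have hΦd : ∀ t ∈ Ioo l u, HasDerivAt Φ (ρ t) t := by
    intro t ht
    rw [hΦeq]
    apply intervalIntegral.integral_hasDerivAt_right hρglob.intervalIntegrable
    · exact ⟨univ, univ_mem, by simpa [Measure.restrict_univ] using hρglob.aestronglyMeasurable⟩
    · exact hρcont.continuousAt (isOpen_Ioo.mem_nhds ht)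
  have h'meas : AEStronglyMeasurable h' (volume : Measure ℝ) := by
    have hae : deriv h =ᵐ[(volume : Measure ℝ)] h' := hderiv.mono fun t ht => ht.deriv
    exact (measurable_deriv h).aestronglyMeasurable.congr hae
  have hKnn : (0:ℝ) ≤ K := K.coe_nonneg
  have h'bd : ∀ᵐ t ∂(volume : Measure ℝ), |h' t| ≤ K := by
    filter_upwards [hderiv] with t ht
    have hs := hasDerivAt_iff_tendsto_slope.1 ht
    have hbd : ∀ᶠ y in 𝓝[≠] t, |slope h t y| ≤ K := by
      filter_upwards [self_mem_nhdsWithin] with y hy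
      have hyt : y ≠ t := hy
      rw [slope_def_field, abs_div]
      rw [div_le_iff₀ (abs_pos.2 (sub_ne_zero.2 hyt))]
      have := hLip.dist_le_mul y t
      rw [Real.dist_eq, Real.dist_eq] at this
      exact this
    exact le_of_tendsto hs.abs hbd
  have hΦ01 : ∀ t, l ≤ t → t ≤ u → 0 ≤ Φ t ∧ Φ t ≤ 1 := by
    intro t h1 h2
    constructor
    · rw [hΦ t]
      exact setIntegral_nonneg measurableSet_Ioo fun y _ => ρnn y
    · rw [hΦ t, ← hρprob]
      exact setIntegral_mono_set hρint (ae_of_all _ fun y => ρnn y)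
        (HasSubset.Subset.eventuallyLE (Ioo_subset_Ioo_right h2))
  have hsplitInt : ∀ (F : ℝ → ℝ) (w : ℝ), l < w → w < u → IntegrableOn F (Ioo l u) →
      (∫ y in Ioo l u, F y) = (∫ y in Ioo l w, F y) + ∫ y in Ioo w u, F y := by
    intro F w hlw hwu hFi
    have hset : Ioo l u = Ioo l w ∪ Ico w u := by
      ext y
      simp only [mem_Ioo, mem_union, mem_Ico]
      constructor
      · rintro ⟨h1, h2⟩
        rcases lt_or_ge y w with hc | hc
        · exact Or.inl ⟨h1, hc⟩
        · exact Or.inr ⟨hc, h2⟩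
      · rintro (⟨h1, h2⟩ | ⟨h1, h2⟩) <;> constructor <;> linarith
    have hdisj : Disjoint (Ioo l w) (Ico w u) := by
      rw [disjoint_left]
      rintro y ⟨_, h2⟩ ⟨h3, _⟩
      linarith
    rw [hset, setIntegral_union hdisj measurableSet_Ico
        (hFi.mono_set (by rw [hset]; exact subset_union_left))
        (hFi.mono_set (by rw [hset]; exact subset_union_right)),
      integral_Ico_eq_integral_Ioo]
  -- bound for h on [l,u]
  obtain ⟨Mh, hMh⟩ := isCompact_Icc.exists_bound_of_continuousOn
    (hLip.continuous.continuousOn : ContinuousOn h (Icc l u))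
  -- integrability facts
  have hIρ1 : IntegrableOn ρ (Ioo l x) := hρint.mono_set (Ioo_subset_Ioo_right xu.le)
  have hIρ2 : IntegrableOn ρ (Ioo x u) := hρint.mono_set (Ioo_subset_Ioo_left lx.le)
  have hIyρ1 : IntegrableOn (fun y => y * ρ y) (Ioo l x) :=
    hint.mono_set (Ioo_subset_Ioo_right xu.le)
  have hIyρ2 : IntegrableOn (fun y => y * ρ y) (Ioo x u) :=
    hint.mono_set (Ioo_subset_Ioo_left lx.le)
  have hIh : IntegrableOn (fun y => h y * ρ y) (Ioo l u) := by
    apply hρint.bdd_mul (c := Mh) (hLip.continuous.aestronglyMeasurable.restrict)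
    filter_upwards [ae_restrict_mem measurableSet_Ioo] with y hy
    exact hMh y ⟨hy.1.le, hy.2.le⟩
  have hIh1 : IntegrableOn (fun y => h y * ρ y) (Ioo l x) :=
    hIh.mono_set (Ioo_subset_Ioo_right xu.le)
  have hIh2 : IntegrableOn (fun y => h y * ρ y) (Ioo x u) :=
    hIh.mono_set (Ioo_subset_Ioo_left lx.le)
  have hIρh1 : IntegrableOn (fun y => ρ y * h y) (Ioo l x) :=
    hIh1.congr_fun (fun y _ => mul_comm (h y) (ρ y)) measurableSet_Ioo
  have hIρh2 : IntegrableOn (fun y => ρ y * h y) (Ioo x u) :=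
    hIh2.congr_fun (fun y _ => mul_comm (h y) (ρ y)) measurableSet_Ioo
  have hIΦ1 : IntegrableOn Φ (Ioo l x) :=
    hΦcont.integrableOn_Icc.mono_set Ioo_subset_Icc_self
  have hIΦ2 : IntegrableOn (fun s => 1 - Φ s) (Ioo x u) :=
    (continuous_const.sub hΦcont).integrableOn_Icc.mono_set Ioo_subset_Icc_self
  have hIh' : ∀ p q : ℝ, IntegrableOn h' (Ioo p q) := by
    intro p q
    apply Integrable.mono' (g := fun _ => (K : ℝ))
      (integrableOn_const measure_Ioo_lt_top.ne) h'meas.restrict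
    filter_upwards [ae_restrict_of_ae h'bd] with t ht
    exact ht
  have hIΦh' : IntegrableOn (fun t => Φ t * h' t) (Ioo l x) := by
    apply (hIh' l x).bdd_mul (c := 1) hΦcont.aestronglyMeasurable.restrict
    filter_upwards [ae_restrict_mem measurableSet_Ioo] with t ht
    rw [Real.norm_eq_abs, abs_le]
    have := hΦ01 t (by linarith [ht.1]) (by linarith [ht.2])
    constructor <;> linarith [this.1, this.2]
  have hI1Φh' : IntegrableOn (fun s => (1 - Φ s) * h' s) (Ioo x u) := by
    apply (hIh' x u).bdd_mul (c := 1) (continuous_const.sub hΦcont).aestronglyMeasurable.restrict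
    filter_upwards [ae_restrict_mem measurableSet_Ioo] with t ht
    rw [Real.norm_eq_abs, abs_le]
    have := hΦ01 t (by linarith [ht.1]) (by linarith [ht.2])
    constructor <;> simp only [Pi.sub_apply] <;> linarith [this.1, this.2]
  -- sequences
  set aseq : ℕ → ℝ := fun n => l + (x - l)/(n + 2) with haseqdef
  set bseq : ℕ → ℝ := fun n => u - (u - x)/(n + 2) with hbseqdef
  have hxl : (0:ℝ) < x - l := by linarith
  have hux : (0:ℝ) < u - x := by linarith
  have hn2 : ∀ n : ℕ, (0:ℝ) < (n:ℝ) + 2 := fun n => by positivity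
  have haseq_mem : ∀ n, aseq n ∈ Ioo l x := by
    intro n
    constructor
    · have : 0 < (x - l)/((n:ℝ) + 2) := div_pos hxl (hn2 n)
      simp only [haseqdef]; linarith
    · have : (x - l)/((n:ℝ) + 2) < x - l := div_lt_self hxl (by have : (0:ℝ) ≤ (n:ℝ) := Nat.cast_nonneg n; linarith)
      simp only [haseqdef]; linarith
  have hbseq_mem : ∀ n, bseq n ∈ Ioo x u := by
    intro n
    constructor
    · have : (u - x)/((n:ℝ) + 2) < u - x := div_lt_self hux (by have : (0:ℝ) ≤ (n:ℝ) := Nat.cast_nonneg n; linarith)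
      simp only [hbseqdef]; linarith
    · have : 0 < (u - x)/((n:ℝ) + 2) := div_pos hux (hn2 n)
      simp only [hbseqdef]; linarith
  have haseq_anti : ∀ p q : ℕ, p ≤ q → aseq q ≤ aseq p := by
    intro p q hpq
    simp only [haseqdef]
    have : (x - l)/((q:ℝ) + 2) ≤ (x - l)/((p:ℝ) + 2) :=
      div_le_div_of_nonneg_left hxl.le (hn2 p) (by have : (p:ℝ) ≤ (q:ℝ) := Nat.cast_le.mpr hpq; linarith : ((p:ℝ)+2) ≤ (q:ℝ)+2)
    linarith
  have hbseq_mono : ∀ p q : ℕ, p ≤ q → bseq p ≤ bseq q := by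
    intro p q hpq
    simp only [hbseqdef]
    have : (u - x)/((q:ℝ) + 2) ≤ (u - x)/((p:ℝ) + 2) :=
      div_le_div_of_nonneg_left hux.le (hn2 p) (by have : (p:ℝ) ≤ (q:ℝ) := Nat.cast_le.mpr hpq; linarith : ((p:ℝ)+2) ≤ (q:ℝ)+2)
    linarith
  have hinv_tend : Tendsto (fun n : ℕ => 1/((n:ℝ) + 2)) atTop (𝓝 0) := by
    simp only [one_div]
    exact Tendsto.comp tendsto_inv_atTop_zero
      (tendsto_atTop_add_const_right atTop 2 tendsto_natCast_atTop_atTop)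
  have haseq_tend : Tendsto aseq atTop (𝓝 l) := by
    have : aseq = fun n : ℕ => l + (x - l) * (1/((n:ℝ) + 2)) := by
      funext n; simp only [haseqdef]; ring
    rw [this]
    simpa using tendsto_const_nhds.add (hinv_tend.const_mul (x - l))
  have hbseq_tend : Tendsto bseq atTop (𝓝 u) := by
    have : bseq = fun n : ℕ => u - (u - x) * (1/((n:ℝ) + 2)) := by
      funext n; simp only [hbseqdef]; ring
    rw [this]
    simpa using tendsto_const_nhds.sub (hinv_tend.const_mul (u - x))
  have hUa : (⋃ n, Ioo (aseq n) x) = Ioo l x := by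
    ext y
    simp only [mem_iUnion, mem_Ioo]
    constructor
    · rintro ⟨n, h1, h2⟩
      exact ⟨lt_trans (haseq_mem n).1 h1, h2⟩
    · rintro ⟨h1, h2⟩
      obtain ⟨n, hn⟩ := (haseq_tend.eventually_lt_const h1).exists
      exact ⟨n, hn, h2⟩
  have hUb : (⋃ n, Ioo x (bseq n)) = Ioo x u := by
    ext y
    simp only [mem_iUnion, mem_Ioo]
    constructor
    · rintro ⟨n, h1, h2⟩
      exact ⟨h1, lt_trans h2 (hbseq_mem n).2⟩
    · rintro ⟨h1, h2⟩
      obtain ⟨n, hn⟩ := (hbseq_tend.eventually_const_lt h2).exists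
      exact ⟨n, h1, hn⟩
  have limIa : ∀ Fn : ℝ → ℝ, IntegrableOn Fn (Ioo l x) →
      Tendsto (fun n => ∫ t in Ioo (aseq n) x, Fn t) atTop (𝓝 (∫ t in Ioo l x, Fn t)) := by
    intro Fn hFn
    have := tendsto_setIntegral_of_monotone (s := fun n => Ioo (aseq n) x)
      (fun _ => measurableSet_Ioo)
      (fun p q hpq => Ioo_subset_Ioo_left (haseq_anti p q hpq))
      (by rw [hUa]; exact hFn)
    rwa [hUa] at this
  have limIb : ∀ Fn : ℝ → ℝ, IntegrableOn Fn (Ioo x u) →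
      Tendsto (fun n => ∫ t in Ioo x (bseq n), Fn t) atTop (𝓝 (∫ t in Ioo x u, Fn t)) := by
    intro Fn hFn
    have := tendsto_setIntegral_of_monotone (s := fun n => Ioo x (bseq n))
      (fun _ => measurableSet_Ioo)
      (fun p q hpq => Ioo_subset_Ioo_right (hbseq_mono p q hpq))
      (by rw [hUb]; exact hFn)
    rwa [hUb] at this
  set S1 : ℝ := ∫ y in Ioo l x, h y * ρ y with hS1
  set S2 : ℝ := ∫ y in Ioo x u, h y * ρ y with hS2
  set G : ℝ := ∫ y in Ioo x u, y * ρ y with hG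
  set P : ℝ := ∫ t in Ioo l x, Φ t with hPdef
  set Q : ℝ := ∫ s in Ioo x u, (1 - Φ s) with hQdef
  set A : ℝ := ∫ t in Ioo l x, Φ t * h' t with hAdef
  set B : ℝ := ∫ s in Ioo x u, (1 - Φ s) * h' s with hBdef
  set F : ℝ := ∫ y in Ioo l x, (h y - m) * ρ y with hFdef
  have hρx : 0 < ρ x := hρpos x ⟨lx, xu⟩
  have hgx : gstar x * ρ x = G := hg x ⟨lx, xu⟩
  have hΦl : Φ l = 0 := by rw [hΦ l]; simp
  have hΦu : Φ u = 1 := by rw [hΦ u]; exact hρprob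
  have hyρ1G : (∫ y in Ioo l x, y * ρ y) = -G := by
    have hsp := hsplitInt (fun y => y * ρ y) x lx xu hint
    rw [hmean, ← hG] at hsp
    linarith
  have hGpos : 0 < G := by
    rcases le_or_gt 0 x with hx0 | hx0
    · rw [hG, setIntegral_pos_iff_support_of_nonneg_ae]
      · refine lt_of_lt_of_le ?_ (measure_mono (fun y hy => ⟨?_, hy⟩))
        · rw [Real.volume_Ioo]; exact ENNReal.ofReal_pos.2 (by linarith)
        · exact Function.mem_support.2 (ne_of_gt (mul_pos (lt_of_le_of_lt hx0 hy.1)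
            (hρpos y ⟨lt_trans lx hy.1, hy.2⟩)))
      · filter_upwards [ae_restrict_mem measurableSet_Ioo] with y hy
        exact mul_nonneg (le_trans hx0 hy.1.le) (ρnn y)
      · exact hIyρ2
    · have hneg : (∫ y in Ioo l x, -y * ρ y) = - ∫ y in Ioo l x, y * ρ y := by
        rw [← MeasureTheory.integral_neg]
        simp only [neg_mul]
      have h2 : G = ∫ y in Ioo l x, -y * ρ y := by
        rw [hneg, hyρ1G, neg_neg]
      rw [h2, setIntegral_pos_iff_support_of_nonneg_ae]
      · refine lt_of_lt_of_le ?_ (measure_mono (fun y hy => ⟨?_, hy⟩))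
        · rw [Real.volume_Ioo]; exact ENNReal.ofReal_pos.2 (by linarith)
        · exact Function.mem_support.2 (ne_of_gt (mul_pos (by linarith [hy.2] : (0:ℝ) < -y)
            (hρpos y ⟨hy.1, lt_trans hy.2 xu⟩)))
      · filter_upwards [ae_restrict_mem measurableSet_Ioo] with y hy
        exact mul_nonneg (by linarith [hy.2] : (0:ℝ) ≤ -y) (ρnn y)
      · exact (IntegrableOn.congr_fun hIyρ1.neg (fun y _ => (neg_mul y (ρ y)).symm) measurableSet_Ioo)
  have hgpos : 0 < gstar x := by
    by_contra hc
    push_neg at hc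
    nlinarith
  have hsplit_m : m = S1 + S2 := by
    rw [hm, hS1, hS2]
    exact hsplitInt (fun y => h y * ρ y) x lx xu hIh
  have hΦx : Φ x = ∫ t in Ioo l x, ρ t := hΦ x
  have hF : F = S1 - m * Φ x := by
    rw [hFdef]
    have e : ∀ y : ℝ, (h y - m) * ρ y = h y * ρ y - m * ρ y := fun y => by ring
    simp only [e]
    rw [MeasureTheory.integral_sub hIh1 (hIρ1.const_mul m),
      MeasureTheory.integral_const_mul, ← hS1, ← hΦx]
  have E1 : ∀ a, a ∈ Ioo l x → (∫ t in Ioo a x, (Φ t + t * ρ t)) = x * Φ x - a * Φ a := by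
    intro a ha
    have hsubIcc : Icc a x ⊆ Ioo l u := fun t ht =>
      ⟨lt_of_lt_of_le ha.1 ht.1, lt_of_le_of_lt ht.2 xu⟩
    have hder : ∀ t ∈ Ioo a x, HasDerivAt (fun r => r * Φ r) (Φ t + t * ρ t) t := by
      intro t ht
      have h1 := (hasDerivAt_id t).fun_mul (hΦd t (hsubIcc ⟨ht.1.le, ht.2.le⟩))
      exact h1.congr_deriv (by simp only [id_eq]; ring)
    have hcont2 : ContinuousOn (fun r => r * Φ r) (Icc a x) :=
      (continuous_id.mul hΦcont).continuousOn
    have hii : IntervalIntegrable (fun t => Φ t + t * ρ t) volume a x := by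
      apply ContinuousOn.intervalIntegrable
      apply ContinuousOn.add hΦcont.continuousOn
      apply ContinuousOn.mul continuousOn_id
      apply hρcont.mono
      rw [uIcc_of_le ha.2.le]
      exact hsubIcc
    have hfd := intervalIntegral.integral_eq_sub_of_hasDerivAt_of_le ha.2.le hcont2 hder hii
    rw [intervalIntegral.integral_of_le ha.2.le, integral_Ioc_eq_integral_Ioo] at hfd
    rw [hfd]
  have hP : P = x * Φ x + G := by
    have hlim1 := limIa (fun t => Φ t + t * ρ t) (hIΦ1.add hIyρ1)
    have hlim2 : Tendsto (fun n => x * Φ x - aseq n * Φ (aseq n)) atTop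
        (𝓝 (x * Φ x - l * Φ l)) :=
      tendsto_const_nhds.sub (haseq_tend.mul ((hΦcont.tendsto l).comp haseq_tend))
    have heq : (∫ t in Ioo l x, (Φ t + t * ρ t)) = x * Φ x - l * Φ l :=
      tendsto_nhds_unique (hlim1.congr fun n => E1 (aseq n) (haseq_mem n)) hlim2
    rw [MeasureTheory.integral_add hIΦ1 hIyρ1, hyρ1G, hΦl, ← hPdef] at heq
    simp only [mul_zero, sub_zero] at heq
    linarith
  have E2 : ∀ b, b ∈ Ioo x u → (∫ t in Ioo x b, ((1 - Φ t) - t * ρ t))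
      = b * (1 - Φ b) - x * (1 - Φ x) := by
    intro b hb
    have hsubIcc : Icc x b ⊆ Ioo l u := fun t ht =>
      ⟨lt_of_lt_of_le lx ht.1, lt_of_le_of_lt ht.2 hb.2⟩
    have hder : ∀ t ∈ Ioo x b, HasDerivAt (fun r => r * (1 - Φ r)) ((1 - Φ t) - t * ρ t) t := by
      intro t ht
      have h1 := (hasDerivAt_id t).fun_mul
        ((hasDerivAt_const t (1:ℝ)).fun_sub (hΦd t (hsubIcc ⟨ht.1.le, ht.2.le⟩)))
      exact h1.congr_deriv (by simp only [id_eq]; ring)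
    have hcont2 : ContinuousOn (fun r => r * (1 - Φ r)) (Icc x b) :=
      (continuous_id.mul (continuous_const.sub hΦcont)).continuousOn
    have hii : IntervalIntegrable (fun t => (1 - Φ t) - t * ρ t) volume x b := by
      apply ContinuousOn.intervalIntegrable
      apply ContinuousOn.sub (continuous_const.sub hΦcont).continuousOn
      apply ContinuousOn.mul continuousOn_id
      apply hρcont.mono
      rw [uIcc_of_le hb.1.le]
      exact hsubIcc
    have hfd := intervalIntegral.integral_eq_sub_of_hasDerivAt_of_le hb.1.le hcont2 hder hii
    rw [intervalIntegral.integral_of_le hb.1.le, integral_Ioc_eq_integral_Ioo] at hfd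
    rw [hfd]
  have hQ : Q = G - x * (1 - Φ x) := by
    have hlim1 := limIb (fun t => (1 - Φ t) - t * ρ t) (hIΦ2.sub hIyρ2)
    have hlim2 : Tendsto (fun n => bseq n * (1 - Φ (bseq n)) - x * (1 - Φ x)) atTop
        (𝓝 (u * (1 - Φ u) - x * (1 - Φ x))) :=
      (hbseq_tend.mul (tendsto_const_nhds.sub ((hΦcont.tendsto u).comp hbseq_tend))).sub
        tendsto_const_nhds
    have heq : (∫ t in Ioo x u, ((1 - Φ t) - t * ρ t)) = u * (1 - Φ u) - x * (1 - Φ x) :=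
      tendsto_nhds_unique (hlim1.congr fun n => E2 (bseq n) (hbseq_mem n)) hlim2
    rw [MeasureTheory.integral_sub hIΦ2 hIyρ2, hΦu, ← hQdef, ← hG] at heq
    simp only [sub_self, mul_zero, zero_sub] at heq
    linarith
  have hMh0 : 0 ≤ Mh := le_trans (norm_nonneg (h l)) (hMh l ⟨le_rfl, by linarith⟩)
  have E3 : ∀ a, a ∈ Ioo l x → (∫ t in Ioo a x, (ρ t * h t + Φ t * h' t))
      = Φ x * h x - Φ a * h a := by
    intro a ha
    set c : ℝ := (x + u)/2 with hcdef
    have hxc : x < c := by rw [hcdef]; linarith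
    have hcu : c < u := by rw [hcdef]; linarith
    have hsubc : Icc a c ⊆ Ioo l u := fun t ht =>
      ⟨lt_of_lt_of_le ha.1 ht.1, lt_of_le_of_lt ht.2 hcu⟩
    obtain ⟨Cρ, hCρ⟩ := isCompact_Icc.exists_bound_of_continuousOn (hρcont.mono hsubc)
    have hac : a ≤ c := le_trans ha.2.le hxc.le
    have hCρ0 : 0 ≤ Cρ := le_trans (norm_nonneg (ρ a)) (hCρ a ⟨le_rfl, hac⟩)
    have hΦlip : ∀ s ∈ Icc a c, ∀ t ∈ Icc a c, |Φ s - Φ t| ≤ Cρ * |s - t| := by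
      intro s hs t ht
      have hdiff : Φ s - Φ t = ∫ r in t..s, ρ r := by
        rw [hΦeq]
        show (∫ r in l..s, ρ r) - (∫ r in l..t, ρ r) = ∫ r in t..s, ρ r
        exact intervalIntegral.integral_interval_sub_left hρglob.intervalIntegrable
          hρglob.intervalIntegrable
      rw [hdiff, ← Real.norm_eq_abs]
      apply intervalIntegral.norm_integral_le_of_norm_le_const
      intro y hy
      exact hCρ y (uIcc_subset_Icc ht hs (Ioc_subset_Icc_self hy))
    have hgLip : ∀ s ∈ Icc a c, ∀ t ∈ Icc a c,
        |Φ s * h s - Φ t * h t| ≤ ((K : ℝ) + Mh * Cρ) * |s - t| := by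
      intro s hs t ht
      have e : Φ s * h s - Φ t * h t = Φ s * (h s - h t) + h t * (Φ s - Φ t) := by ring
      have hsΦ := hΦ01 s (hsubc hs).1.le (hsubc hs).2.le
      have h1 : |Φ s| ≤ 1 := abs_le.2 ⟨by linarith [hsΦ.1], hsΦ.2⟩
      have h2 : |h t| ≤ Mh := by
        have := hMh t ⟨(hsubc ht).1.le, (hsubc ht).2.le⟩
        rwa [Real.norm_eq_abs] at this
      have h3 : |h s - h t| ≤ (K : ℝ) * |s - t| := by
        have := hLip.dist_le_mul s t
        rwa [Real.dist_eq, Real.dist_eq] at this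
      have h4 := hΦlip s hs t ht
      calc |Φ s * h s - Φ t * h t| = |Φ s * (h s - h t) + h t * (Φ s - Φ t)| := by rw [e]
      _ ≤ |Φ s * (h s - h t)| + |h t * (Φ s - Φ t)| := abs_add_le _ _
      _ = |Φ s| * |h s - h t| + |h t| * |Φ s - Φ t| := by rw [abs_mul, abs_mul]
      _ ≤ 1 * ((K:ℝ) * |s - t|) + Mh * (Cρ * |s - t|) := by
          apply add_le_add
          · exact mul_le_mul h1 h3 (abs_nonneg _) zero_le_one
          · exact mul_le_mul h2 h4 (abs_nonneg _) hMh0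
      _ = ((K:ℝ) + Mh * Cρ) * |s - t| := by ring
    have hd2 : ∀ᵐ t ∂(volume : Measure ℝ), t ∈ Ioo a x →
        HasDerivAt (fun r => Φ r * h r) (ρ t * h t + Φ t * h' t) t := by
      filter_upwards [hderiv] with t hdt hmem
      exact (hΦd t ⟨lt_trans ha.1 hmem.1, lt_trans hmem.2 xu⟩).mul hdt
    have hmeas2 : AEStronglyMeasurable (fun t => ρ t * h t + Φ t * h' t)
        (volume.restrict (Ioo a x)) :=
      (IntegrableOn.mono_set (hIρh1.add hIΦh') (Ioo_subset_Ioo_left ha.1.le)).aestronglyMeasurable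
    exact ftc_ae ha.2.le hxc (by positivity) hgLip hd2 hmeas2
  have hA : A = Φ x * h x - S1 := by
    have hlim1 := limIa (fun t => ρ t * h t + Φ t * h' t) (hIρh1.add hIΦh')
    have hlim2 : Tendsto (fun n => Φ x * h x - Φ (aseq n) * h (aseq n)) atTop
        (𝓝 (Φ x * h x - Φ l * h l)) :=
      tendsto_const_nhds.sub (((hΦcont.tendsto l).comp haseq_tend).mul
        ((hLip.continuous.tendsto l).comp haseq_tend))
    have heq : (∫ t in Ioo l x, (ρ t * h t + Φ t * h' t)) = Φ x * h x - Φ l * h l :=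
      tendsto_nhds_unique (hlim1.congr fun n => E3 (aseq n) (haseq_mem n)) hlim2
    have hS1' : (∫ y in Ioo l x, ρ y * h y) = S1 := by
      rw [hS1]
      exact setIntegral_congr_fun measurableSet_Ioo fun y _ => mul_comm (ρ y) (h y)
    rw [MeasureTheory.integral_add hIρh1 hIΦh', hΦl, hS1', ← hAdef] at heq
    simp only [zero_mul, sub_zero] at heq
    linarith [heq]
  have E4 : ∀ b, b ∈ Ioo x u → (∫ t in Ioo x b, ((1 - Φ t) * h' t - ρ t * h t))
      = (1 - Φ b) * h b - (1 - Φ x) * h x := by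
    intro b hb
    set c : ℝ := (b + u)/2 with hcdef
    have hbc : b < c := by rw [hcdef]; linarith [hb.2]
    have hcu : c < u := by rw [hcdef]; linarith [hb.2]
    have hsubc : Icc x c ⊆ Ioo l u := fun t ht =>
      ⟨lt_of_lt_of_le lx ht.1, lt_of_le_of_lt ht.2 hcu⟩
    obtain ⟨Cρ, hCρ⟩ := isCompact_Icc.exists_bound_of_continuousOn (hρcont.mono hsubc)
    have hxc : x ≤ c := le_trans hb.1.le hbc.le
    have hCρ0 : 0 ≤ Cρ := le_trans (norm_nonneg (ρ x)) (hCρ x ⟨le_rfl, hxc⟩)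
    have hΦlip : ∀ s ∈ Icc x c, ∀ t ∈ Icc x c, |Φ s - Φ t| ≤ Cρ * |s - t| := by
      intro s hs t ht
      have hdiff : Φ s - Φ t = ∫ r in t..s, ρ r := by
        rw [hΦeq]
        show (∫ r in l..s, ρ r) - (∫ r in l..t, ρ r) = ∫ r in t..s, ρ r
        exact intervalIntegral.integral_interval_sub_left hρglob.intervalIntegrable
          hρglob.intervalIntegrable
      rw [hdiff, ← Real.norm_eq_abs]
      apply intervalIntegral.norm_integral_le_of_norm_le_const
      intro y hy
      exact hCρ y (uIcc_subset_Icc ht hs (Ioc_subset_Icc_self hy))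
    have hgLip : ∀ s ∈ Icc x c, ∀ t ∈ Icc x c,
        |(1 - Φ s) * h s - (1 - Φ t) * h t| ≤ ((K : ℝ) + Mh * Cρ) * |s - t| := by
      intro s hs t ht
      have e : (1 - Φ s) * h s - (1 - Φ t) * h t
          = (1 - Φ s) * (h s - h t) + h t * (Φ t - Φ s) := by ring
      have hsΦ := hΦ01 s (hsubc hs).1.le (hsubc hs).2.le
      have h1 : |1 - Φ s| ≤ 1 := abs_le.2 ⟨by linarith [hsΦ.2], by linarith [hsΦ.1]⟩
      have h2 : |h t| ≤ Mh := by
        have := hMh t ⟨(hsubc ht).1.le, (hsubc ht).2.le⟩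
        rwa [Real.norm_eq_abs] at this
      have h3 : |h s - h t| ≤ (K : ℝ) * |s - t| := by
        have := hLip.dist_le_mul s t
        rwa [Real.dist_eq, Real.dist_eq] at this
      have h4 : |Φ t - Φ s| ≤ Cρ * |s - t| := by
        have := hΦlip t ht s hs
        rwa [abs_sub_comm t s] at this
      calc |(1 - Φ s) * h s - (1 - Φ t) * h t|
          = |(1 - Φ s) * (h s - h t) + h t * (Φ t - Φ s)| := by rw [e]
      _ ≤ |(1 - Φ s) * (h s - h t)| + |h t * (Φ t - Φ s)| := abs_add_le _ _
      _ = |1 - Φ s| * |h s - h t| + |h t| * |Φ t - Φ s| := by rw [abs_mul, abs_mul]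
      _ ≤ 1 * ((K:ℝ) * |s - t|) + Mh * (Cρ * |s - t|) := by
          apply add_le_add
          · exact mul_le_mul h1 h3 (abs_nonneg _) zero_le_one
          · exact mul_le_mul h2 h4 (abs_nonneg _) hMh0
      _ = ((K:ℝ) + Mh * Cρ) * |s - t| := by ring
    have hd2 : ∀ᵐ t ∂(volume : Measure ℝ), t ∈ Ioo x b →
        HasDerivAt (fun r => (1 - Φ r) * h r) ((1 - Φ t) * h' t - ρ t * h t) t := by
      filter_upwards [hderiv] with t hdt hmem
      have h1 := ((hasDerivAt_const t (1:ℝ)).fun_sub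
        (hΦd t ⟨lt_trans lx hmem.1, lt_trans hmem.2 hb.2⟩)).fun_mul hdt
      exact h1.congr_deriv (by ring)
    have hmeas2 : AEStronglyMeasurable (fun t => (1 - Φ t) * h' t - ρ t * h t)
        (volume.restrict (Ioo x b)) :=
      (IntegrableOn.mono_set (hI1Φh'.sub hIρh2) (Ioo_subset_Ioo_right hb.2.le)).aestronglyMeasurable
    exact ftc_ae hb.1.le hbc (by positivity) hgLip hd2 hmeas2
  have hB : B = S2 - (1 - Φ x) * h x := by
    have hlim1 := limIb (fun t => (1 - Φ t) * h' t - ρ t * h t) (hI1Φh'.sub hIρh2)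
    have hlim2 : Tendsto (fun n => (1 - Φ (bseq n)) * h (bseq n) - (1 - Φ x) * h x) atTop
        (𝓝 ((1 - Φ u) * h u - (1 - Φ x) * h x)) :=
      ((tendsto_const_nhds.sub ((hΦcont.tendsto u).comp hbseq_tend)).mul
        ((hLip.continuous.tendsto u).comp hbseq_tend)).sub tendsto_const_nhds
    have heq : (∫ t in Ioo x u, ((1 - Φ t) * h' t - ρ t * h t))
        = (1 - Φ u) * h u - (1 - Φ x) * h x :=
      tendsto_nhds_unique (hlim1.congr fun n => E4 (bseq n) (hbseq_mem n)) hlim2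
    have hS2' : (∫ y in Ioo x u, ρ y * h y) = S2 := by
      rw [hS2]
      exact setIntegral_congr_fun measurableSet_Ioo fun y _ => mul_comm (ρ y) (h y)
    rw [MeasureTheory.integral_sub hI1Φh' hIρh2, hΦu, hS2', ← hBdef] at heq
    simp only [sub_self, zero_mul, zero_sub] at heq
    linarith [heq]
  have hD : (∫ s in Ioo x u, ∫ t in Ioo l x, (1 - Φ s) * Φ t * (h' t - h' s))
      = Q * A - P * B := by
    have hinner : ∀ s ∈ Ioo x u, (∫ t in Ioo l x, (1 - Φ s) * Φ t * (h' t - h' s))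
        = (1 - Φ s) * A - ((1 - Φ s) * h' s) * P := by
      intro s _
      have e : ∀ t : ℝ, (1 - Φ s) * Φ t * (h' t - h' s)
          = (1 - Φ s) * (Φ t * h' t) - ((1 - Φ s) * h' s) * Φ t := fun t => by ring
      simp only [e]
      rw [MeasureTheory.integral_sub (hIΦh'.const_mul _) (hIΦ1.const_mul _),
        MeasureTheory.integral_const_mul, MeasureTheory.integral_const_mul, ← hAdef, ← hPdef]
    rw [setIntegral_congr_fun measurableSet_Ioo hinner,
      MeasureTheory.integral_sub (hIΦ2.mul_const A) (hI1Φh'.mul_const P),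
      MeasureTheory.integral_mul_const, MeasureTheory.integral_mul_const, ← hQdef, ← hBdef]
    ring
  have hfx : f x = F / G := by
    rw [hf x ⟨lx, xu⟩, hgx, ← hFdef]
    ring
  -- final algebra
  have e1 : Q * A - P * B = (h x - m) * G + x * F := by
    rw [hP, hQ, hA, hB, hF, hsplit_m]; ring
  have hfinal : (1 / ((gstar x) ^ 2 * ρ x)) *
      (∫ s in Ioo x u, ∫ t in Ioo l x, (1 - Φ s) * Φ t * (h' t - h' s)) = d := by
    rw [hD, e1]
    have hd' : d = (h x - m + x * (F / G)) / gstar x := by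
      rw [← hfx]
      field_simp
      linarith [hde]
    rw [hd', ← hgx]
    field_simp
  rw [hfinal]
  exact hdd
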